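/- Let p, q be coprime positive integers, let c₁, c₂ be nonzero reals and φₓ, φ_y reals, and suppose the closed curve γ(τ) = (c₁ cos(2πpτ + φₓ), c₂ cos(2πqτ + φ_y)), τ ∈ [0,1], never equals (0,0). Let θ : [0,1] → ℝ be any continuous function such that γ(τ) = ‖γ(τ)‖ · (cos θ(τ), sin θ(τ)) for all τ ∈ [0,1]. Then: if at least one of p, q is even, θ(1) − θ(0) = 0; if both p and q are odd, θ(1) − θ(0) = 2π or θ(1) − θ(0) = −2π. -/

import Mathlib

set_option maxHeartbeats 1000000


open Real Finset Set


private lemma npe (a b : ℤ) (h : Even (a - b)) : (-1:ℝ)^a = (-1:ℝ)^b := by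
  obtain ⟨c, hc⟩ := h
  have : a = b + 2*c := by omega
  rw [this, zpow_add₀ (by norm_num : (-1:ℝ) ≠ 0)]
  rw [show (2*c : ℤ) = c*2 by ring, zpow_mul]
  rw [show ((-1:ℝ)^c)^(2:ℤ) = ((-1:ℝ)^(2:ℤ))^c by rw [← zpow_mul, ← zpow_mul, mul_comm]]
  norm_num

private lemma sign_sin_Ioo {m : ℤ} {x : ℝ} (h1 : m*π < x) (h2 : x < (m+1)*π) :
    0 < (-1:ℝ)^m * Real.sin x := by
  have h := Real.sin_add_int_mul_pi (x - m*π) m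
  have hx : x - m*π + m*π = x := by ring
  rw [hx] at h
  have hs : 0 < Real.sin (x - m*π) := by
    apply Real.sin_pos_of_pos_of_lt_pi <;> [linarith; nlinarith [Real.pi_pos]]
  have hsq : (-1:ℝ)^m * (-1:ℝ)^m = 1 := by
    rw [← zpow_add₀ (by norm_num : (-1:ℝ) ≠ 0)]
    exact npe (m+m) 0 ⟨m, by ring⟩ ▸ by norm_num
  calc 0 < Real.sin (x - m*π) := hs
    _ = (-1:ℝ)^m * ((-1:ℝ)^m * Real.sin (x - m*π)) := by rw [← mul_assoc, hsq, one_mul]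
    _ = (-1:ℝ)^m * Real.sin x := by rw [← h]

private lemma sign_cos_Ioo {m : ℤ} {x : ℝ} (h1 : m*π - π/2 < x) (h2 : x < m*π + π/2) :
    0 < (-1:ℝ)^m * Real.cos x := by
  have h := Real.cos_add_int_mul_pi (x - m*π) m
  have hx : x - m*π + m*π = x := by ring
  rw [hx] at h
  have hs : 0 < Real.cos (x - m*π) := by
    apply Real.cos_pos_of_mem_Ioo; constructor <;> [linarith; linarith]
  have hsq : (-1:ℝ)^m * (-1:ℝ)^m = 1 := by
    rw [← zpow_add₀ (by norm_num : (-1:ℝ) ≠ 0)]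
    exact npe (m+m) 0 ⟨m, by ring⟩ ▸ by norm_num
  calc 0 < Real.cos (x - m*π) := hs
    _ = (-1:ℝ)^m * ((-1:ℝ)^m * Real.cos (x - m*π)) := by rw [← mul_assoc, hsq, one_mul]
    _ = (-1:ℝ)^m * Real.cos x := by rw [← h]

private lemma step_lemma {f : ℝ → ℝ} {a b σ sa sb : ℝ} (hab : a < b)
    (hf : ContinuousOn f (Set.Icc a b))
    (hσ : σ = 1 ∨ σ = -1)
    (hsin : ∀ τ ∈ Set.Ioo a b, 0 < σ * Real.sin (f τ))
    (hca : Real.cos (f a) = sa) (hcb : Real.cos (f b) = sb)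
    (ha : Real.sin (f a) = 0) (hb : Real.sin (f b) = 0) :
    f b - f a = σ * (sa - sb) * (π/2) := by
  have hπ := Real.pi_pos
  obtain ⟨m, hm⟩ := Real.sin_eq_zero_iff.1 ha
  obtain ⟨m', hm'⟩ := Real.sin_eq_zero_iff.1 hb
  set τc := (a+b)/2 with hτc
  have hτcm : τc ∈ Set.Ioo a b := ⟨by simp only [hτc]; linarith, by simp only [hτc]; linarith⟩
  set M := ⌊f τc / π⌋ with hM
  -- image of Ioo is preconnected and avoids multiples of π
  have hS : IsPreconnected (f '' Set.Ioo a b) :=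
    (isPreconnected_Ioo).image f (hf.mono Set.Ioo_subset_Icc_self)
  have hnotpi : ∀ τ ∈ Set.Ioo a b, ∀ k : ℤ, f τ ≠ (k:ℝ)*π := by
    intro τ hτ k hk
    have h1 := hsin τ hτ
    rw [hk, Real.sin_int_mul_pi] at h1
    simp at h1
  have hdiv : (f τc / π) * π = f τc := div_mul_cancel₀ _ hπ.ne'
  have hMlt : (M:ℝ)*π < f τc ∧ f τc < ((M:ℝ)+1)*π := by
    have h1 := Int.floor_le (f τc / π)
    have h2 := Int.lt_floor_add_one (f τc / π)
    rw [← hM] at h1 h2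
    have h1' : (M:ℝ)*π ≤ f τc := by nlinarith [mul_le_mul_of_nonneg_right h1 hπ.le]
    have h2' : f τc < ((M:ℝ)+1)*π := by
      have := mul_lt_mul_of_pos_right h2 hπ
      push_cast at this ⊢
      nlinarith [this]
    exact ⟨lt_of_le_of_ne h1' (fun h => hnotpi τc hτcm M h.symm), h2'⟩
  -- every interior value lies in (Mπ, (M+1)π)
  have hA : ∀ τ ∈ Set.Ioo a b, f τ ∈ Set.Ioo ((M:ℝ)*π) (((M:ℝ)+1)*π) := by
    intro τ hτ
    constructor
    · by_contra hcon
      push_neg at hcon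
      have hmem : ((M:ℝ)*π) ∈ f '' Set.Ioo a b := by
        apply hS.Icc_subset ⟨τ, hτ, rfl⟩ ⟨τc, hτcm, rfl⟩
        exact ⟨hcon, le_of_lt hMlt.1⟩
      obtain ⟨τ', hτ', he⟩ := hmem
      exact hnotpi τ' hτ' M he
    · by_contra hcon
      push_neg at hcon
      have hmem : (((M:ℝ)+1)*π) ∈ f '' Set.Ioo a b := by
        apply hS.Icc_subset ⟨τc, hτcm, rfl⟩ ⟨τ, hτ, rfl⟩
        exact ⟨le_of_lt hMlt.2, hcon⟩
      obtain ⟨τ', hτ', he⟩ := hmem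
      exact hnotpi τ' hτ' (M+1) (by push_cast at he ⊢; linarith [he])
  -- endpoint values lie in the closed interval
  have hclos : ∀ c ∈ Set.Icc a b, f c ∈ Set.Icc ((M:ℝ)*π) (((M:ℝ)+1)*π) := by
    intro c hc
    have hcw : ContinuousWithinAt f (Set.Ioo a b) c :=
      (hf c hc).mono Set.Ioo_subset_Icc_self
    have h1 : f c ∈ closure (f '' Set.Ioo a b) :=
      hcw.mem_closure_image (by rw [closure_Ioo hab.ne]; exact hc)
    have h2 : closure (f '' Set.Ioo a b) ⊆ Set.Icc ((M:ℝ)*π) (((M:ℝ)+1)*π) := by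
      rw [show Set.Icc ((M:ℝ)*π) (((M:ℝ)+1)*π) = closure (Set.Ioo ((M:ℝ)*π) (((M:ℝ)+1)*π))
        from (closure_Ioo (by nlinarith)).symm]
      exact closure_mono (fun x ⟨τ, hτ, he⟩ => he ▸ hA τ hτ)
    exact h2 h1
  -- pin down m and m'
  have hma := hclos a ⟨le_refl a, hab.le⟩
  have hmb := hclos b ⟨hab.le, le_refl b⟩
  rw [← hm] at hma
  rw [← hm'] at hmb
  have hmM : m = M ∨ m = M + 1 := by
    have l1 : (M:ℝ) ≤ (m:ℝ) := le_of_mul_le_mul_right hma.1 hπ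
    have l2 : (m:ℝ) ≤ (M:ℝ)+1 := le_of_mul_le_mul_right hma.2 hπ
    have l1' : M ≤ m := by exact_mod_cast l1
    have l2' : m ≤ M+1 := by exact_mod_cast (by push_cast; exact l2 : (m:ℝ) ≤ ((M+1:ℤ):ℝ))
    omega
  have hmM' : m' = M ∨ m' = M + 1 := by
    have l1 : (M:ℝ) ≤ (m':ℝ) := le_of_mul_le_mul_right hmb.1 hπ
    have l2 : (m':ℝ) ≤ (M:ℝ)+1 := le_of_mul_le_mul_right hmb.2 hπ
    have l1' : M ≤ m' := by exact_mod_cast l1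
    have l2' : m' ≤ M+1 := by exact_mod_cast (by push_cast; exact l2 : (m':ℝ) ≤ ((M+1:ℤ):ℝ))
    omega
  -- determine σ
  have hAc := hA τc hτcm
  have hsgnM : 0 < (-1:ℝ)^M * Real.sin (f τc) := sign_sin_Ioo hAc.1 hAc.2
  have hστ := hsin τc hτcm
  have hMpm : (-1:ℝ)^M = 1 ∨ (-1:ℝ)^M = -1 := by
    rcases Int.even_or_odd M with h | h
    · left; rw [npe M 0 (by simpa using h), zpow_zero]
    · right; rw [npe M 1 (by simpa [Int.even_sub] using h), zpow_one]
  have hσM : σ = (-1:ℝ)^M := by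
    rcases hσ with h | h <;> rcases hMpm with h2 | h2 <;> rw [h, h2]
    · exfalso; rw [h] at hστ; rw [h2] at hsgnM; nlinarith
    · exfalso; rw [h] at hστ; rw [h2] at hsgnM; nlinarith
  have hcosm : ∀ k : ℤ, Real.cos ((k:ℝ)*π) = (-1:ℝ)^k := by
    intro k; simpa using Real.cos_add_int_mul_pi 0 k
  have hsa : sa = (-1:ℝ)^m := by rw [← hca, ← hm, hcosm]
  have hsb : sb = (-1:ℝ)^m' := by rw [← hcb, ← hm', hcosm]
  have hE2 : (-1:ℝ)^M * (-1:ℝ)^M = 1 := by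
    rw [← zpow_add₀ (by norm_num : (-1:ℝ) ≠ 0)]
    rw [npe (M+M) 0 ⟨M, by ring⟩, zpow_zero]
  have hE1 : (-1:ℝ)^(M+1) = -((-1:ℝ)^M) := by
    rw [zpow_add₀ (by norm_num : (-1:ℝ) ≠ 0), zpow_one]; ring
  rw [← hm, ← hm', hsa, hsb, hσM]
  rcases hmM with h | h <;> rcases hmM' with h' | h' <;> subst h <;> subst h' <;>
    push_cast <;> (try rw [hE1]) <;> rcases hMpm with hE | hE <;> rw [hE] <;> ring

private lemma floor_div_int (x : ℝ) (q : ℤ) (hq : 0 < q) : ⌊x / (q:ℝ)⌋ = ⌊x⌋ / q := by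
  have hq' : (0:ℝ) < (q:ℝ) := by exact_mod_cast hq
  have hdr := Int.mul_ediv_add_emod ⌊x⌋ q
  have hr0 : 0 ≤ ⌊x⌋ % q := Int.emod_nonneg _ hq.ne'
  have hrq : ⌊x⌋ % q < q := Int.emod_lt_of_pos _ hq
  rw [Int.floor_eq_iff]
  constructor
  · rw [le_div_iff₀ hq']
    have h1 : ((⌊x⌋/q : ℤ):ℝ) * q ≤ (⌊x⌋:ℝ) := by
      have : (q:ℤ) * (⌊x⌋/q) ≤ ⌊x⌋ := by omega
      exact_mod_cast le_trans (le_of_eq (mul_comm _ _)) (by exact_mod_cast this)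
    exact le_trans h1 (Int.floor_le x)
  · rw [div_lt_iff₀ hq']
    have h2 : x < (⌊x⌋:ℝ) + 1 := Int.lt_floor_add_one x
    have h3 : (⌊x⌋:ℝ) + 1 ≤ (((⌊x⌋/q : ℤ):ℝ) + 1) * q := by
      have : ⌊x⌋ + 1 ≤ ((⌊x⌋/q) + 1) * q := by nlinarith [hdr, hrq]
      calc (⌊x⌋:ℝ) + 1 = (((⌊x⌋ + 1 : ℤ)):ℝ) := by push_cast; ring
        _ ≤ ((((⌊x⌋/q) + 1) * q : ℤ):ℝ) := by exact_mod_cast this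
        _ = (((⌊x⌋/q : ℤ):ℝ) + 1) * q := by push_cast; ring
    linarith

private lemma sum_neg_one_zpow (q : ℕ) (hq : Odd q) :
    ∑ j ∈ range q, (-1:ℝ)^(j:ℤ) = 1 := by
  have h1 : ∀ j : ℕ, (-1:ℝ)^(j:ℤ) = (-1:ℝ)^j := fun j => zpow_natCast _ j
  simp only [h1]
  rw [geom_sum_eq (by norm_num : (-1:ℝ) ≠ 1)]
  rw [hq.neg_one_pow]
  norm_num

private lemma key_sum (p q : ℕ) (hq : Odd q) (hpq : Nat.Coprime p q) (n : ℤ) :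
    (Odd p → ∑ k ∈ range (2*q), (-1:ℝ)^(k:ℤ) * (-1:ℝ)^((n + (k:ℤ)*(p:ℤ))/(q:ℤ))
        = 2 * (-1:ℝ)^n) ∧
    (Even p → ∑ k ∈ range (2*q), (-1:ℝ)^(k:ℤ) * (-1:ℝ)^((n + (k:ℤ)*(p:ℤ))/(q:ℤ)) = 0) := by
  have hq0 : 0 < q := hq.pos
  have hq0' : (0:ℤ) < (q:ℤ) := by exact_mod_cast hq0
  have hqe : Even ((q:ℤ) - 1) := by
    obtain ⟨c, hc⟩ := hq; exact ⟨c, by push_cast [hc]; ring⟩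
  have hne : (-1:ℝ) ≠ 0 := by norm_num
  -- replace the quotient exponent
  have hterm : ∀ k : ℕ, (-1:ℝ)^((n + (k:ℤ)*(p:ℤ))/(q:ℤ))
      = (-1:ℝ)^(n + (k:ℤ)*(p:ℤ) - (n + (k:ℤ)*(p:ℤ)) % (q:ℤ)) := by
    intro k
    set a := n + (k:ℤ)*(p:ℤ) with ha
    apply npe
    have h := Int.mul_ediv_add_emod a (q:ℤ)
    have : a / (q:ℤ) - (a - a % q) = (a/(q:ℤ)) * (1 - q) := by
      nlinarith [h]
    rw [this]
    exact Int.even_mul.2 (Or.inr (by simpa using hqe.neg))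
  set r : ℕ → ℤ := fun k => (n + (k:ℤ)*(p:ℤ)) % (q:ℤ) with hrdef
  have hr0 : ∀ k : ℕ, 0 ≤ r k := fun k => Int.emod_nonneg _ hq0'.ne'
  have hrlt : ∀ k : ℕ, r k < q := fun k => Int.emod_lt_of_pos _ hq0'
  have hrq : ∀ k : ℕ, r (q + k) = r k := by
    intro k
    show (n + ((q:ℕ)+k : ℕ)*(p:ℤ)) % (q:ℤ) = (n + (k:ℤ)*(p:ℤ)) % (q:ℤ)
    push_cast
    rw [show n + ((q:ℤ)+(k:ℤ))*(p:ℤ) = (n + (k:ℤ)*(p:ℤ)) + (q:ℤ)*(p:ℤ) by ring,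
      Int.add_mul_emod_self_left]
  have hbij : ∑ k ∈ range q, (-1:ℝ)^(r k) = 1 := by
    refine Eq.trans ?_ (sum_neg_one_zpow q hq)
    obtain ⟨u, v, huv⟩ := Nat.isCoprime_iff_coprime.2 hpq
    refine Finset.sum_nbij' (fun k => ((n + (k:ℤ)*(p:ℤ)) % (q:ℤ)).toNat)
        (fun jj => ((u * ((jj:ℤ) - n)) % (q:ℤ)).toNat) ?_ ?_ ?_ ?_ ?_
    · intro k hk
      simp only [Finset.mem_range] at *
      have h1 : 0 ≤ (n + (k:ℤ)*(p:ℤ)) % (q:ℤ) := Int.emod_nonneg _ hq0'.ne'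
      have h2 : (n + (k:ℤ)*(p:ℤ)) % (q:ℤ) < (q:ℤ) := Int.emod_lt_of_pos _ hq0'
      omega
    · intro j hj
      simp only [Finset.mem_range] at *
      have h1 := Int.emod_nonneg (u * ((j:ℤ) - n)) hq0'.ne'
      have h2 := Int.emod_lt_of_pos (u * ((j:ℤ) - n)) hq0'
      omega
    · intro k hk
      replace hk : k < q := Finset.mem_range.1 hk
      have h1 : 0 ≤ (n + (k:ℤ)*(p:ℤ)) % (q:ℤ) := Int.emod_nonneg _ hq0'.ne'
      have ht : ((((n + (k:ℤ)*(p:ℤ)) % (q:ℤ)).toNat : ℤ)) = (n + (k:ℤ)*(p:ℤ)) % (q:ℤ) :=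
        Int.toNat_of_nonneg h1
      have e1 : (u * ((((n + (k:ℤ)*(p:ℤ)) % (q:ℤ)).toNat : ℤ) - n)) % (q:ℤ) = (k:ℤ) := by
        rw [ht]
        have m1 : ((n + (k:ℤ)*(p:ℤ)) % (q:ℤ)) % (q:ℤ) = (n + (k:ℤ)*(p:ℤ)) % (q:ℤ) :=
          Int.emod_emod_of_dvd _ dvd_rfl
        have m2 : (u * ((n + (k:ℤ)*(p:ℤ)) % (q:ℤ) - n)) % (q:ℤ)
            = (u * ((n + (k:ℤ)*(p:ℤ)) - n)) % (q:ℤ) := by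
          have : Int.ModEq (q:ℤ) ((n + (k:ℤ)*(p:ℤ)) % (q:ℤ)) (n + (k:ℤ)*(p:ℤ)) := m1
          exact ((this.sub_right n).mul_left u)
        rw [m2, show u * ((n + (k:ℤ)*(p:ℤ)) - n) = (k:ℤ) + (q:ℤ) * (-((k:ℤ)*v)) by
          linear_combination (k:ℤ) * huv]
        rw [Int.add_mul_emod_self_left]
        exact Int.emod_eq_of_lt (by positivity) (by exact_mod_cast hk)
      rw [e1]; simp
    · intro j hj
      replace hj : j < q := Finset.mem_range.1 hj
      have h1 := Int.emod_nonneg (u * ((j:ℤ) - n)) hq0'.ne'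
      have ht : (((u * ((j:ℤ) - n)) % (q:ℤ)).toNat : ℤ) = (u * ((j:ℤ) - n)) % (q:ℤ) :=
        Int.toNat_of_nonneg h1
      have e1 : (n + ((((u * ((j:ℤ) - n)) % (q:ℤ)).toNat : ℤ))*(p:ℤ)) % (q:ℤ) = (j:ℤ) := by
        rw [ht]
        have m1 : ((u * ((j:ℤ) - n)) % (q:ℤ)) % (q:ℤ) = (u * ((j:ℤ) - n)) % (q:ℤ) :=
          Int.emod_emod_of_dvd _ dvd_rfl
        have m2 : (n + ((u * ((j:ℤ) - n)) % (q:ℤ)) * (p:ℤ)) % (q:ℤ)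
            = (n + (u * ((j:ℤ) - n)) * (p:ℤ)) % (q:ℤ) := by
          have : Int.ModEq (q:ℤ) ((u * ((j:ℤ) - n)) % (q:ℤ)) (u * ((j:ℤ) - n)) := m1
          exact (this.mul_right (p:ℤ)).add_left n
        rw [m2, show n + (u * ((j:ℤ) - n)) * (p:ℤ) = (j:ℤ) + (q:ℤ) * (-(v*((j:ℤ)-n))) by
          linear_combination ((j:ℤ) - n) * huv]
        rw [Int.add_mul_emod_self_left]
        exact Int.emod_eq_of_lt (by positivity) (by exact_mod_cast hj)
      show (((n + (((u * ((j:ℤ) - n)) % (q:ℤ)).toNat : ℤ)*(p:ℤ)) % (q:ℤ)).toNat) = j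
      rw [e1]; simp
    · intro k hk
      have := Int.toNat_of_nonneg (hr0 k)
      simp only [hrdef] at this ⊢
      rw [this]
  constructor
  · -- p odd
    intro hp
    have hterm2 : ∀ k : ℕ, (-1:ℝ)^(k:ℤ) * (-1:ℝ)^((n + (k:ℤ)*(p:ℤ))/(q:ℤ))
        = (-1:ℝ)^n * (-1:ℝ)^(r k) := by
      intro k
      rw [hterm k, ← zpow_add₀ hne, ← zpow_add₀ hne]
      apply npe
      rw [show ((k:ℤ) + (n + (k:ℤ)*(p:ℤ) - (n + (k:ℤ)*(p:ℤ)) % (q:ℤ))) - (n + r k)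
        = (k:ℤ)*(1+(p:ℤ)) - 2*(r k) by simp only [hrdef]; ring]
      have hpe : Even (1 + (p:ℤ)) := by
        obtain ⟨c, hc⟩ := hp; exact ⟨(c:ℤ)+1, by push_cast [hc]; ring⟩
      exact (hpe.mul_left _).sub ⟨r k, by ring⟩
    simp only [hterm2]
    rw [two_mul, Finset.sum_range_add]
    simp only [hrq]
    rw [← Finset.mul_sum, hbij]
    ring
  · -- p even
    intro hp
    have hterm2 : ∀ k : ℕ, (-1:ℝ)^(k:ℤ) * (-1:ℝ)^((n + (k:ℤ)*(p:ℤ))/(q:ℤ))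
        = (-1:ℝ)^(k:ℤ) * ((-1:ℝ)^n * (-1:ℝ)^(r k)) := by
      intro k
      congr 1
      rw [hterm k, ← zpow_add₀ hne]
      apply npe
      rw [show ((n + (k:ℤ)*(p:ℤ) - (n + (k:ℤ)*(p:ℤ)) % (q:ℤ))) - (n + r k)
        = (k:ℤ)*(p:ℤ) - 2*(r k) by simp only [hrdef]; ring]
      have hpe : Even ((p:ℤ)) := by
        obtain ⟨c, hc⟩ := hp; exact ⟨(c:ℤ), by push_cast [hc]; ring⟩
      exact (hpe.mul_left _).sub ⟨r k, by ring⟩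
    simp only [hterm2]
    rw [two_mul, Finset.sum_range_add]
    have hqneg : ∀ k : ℕ, ((-1:ℝ)^(((q+k:ℕ)):ℤ)) = -((-1:ℝ)^(k:ℤ)) := by
      intro k
      push_cast
      rw [zpow_add₀ hne]
      rw [show (-1:ℝ)^(q:ℤ) = (-1:ℝ)^(1:ℤ) from npe _ _ hqe, zpow_one]
      ring
    have : ∀ k ∈ range q, (-1:ℝ)^(((q+k:ℕ)):ℤ) * ((-1:ℝ)^n * (-1:ℝ)^(r (q+k)))
        = -((-1:ℝ)^(k:ℤ) * ((-1:ℝ)^n * (-1:ℝ)^(r k))) := by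
      intro k _
      rw [hqneg, hrq]; ring
    rw [Finset.sum_congr rfl this, Finset.sum_neg_distrib]
    ring


private lemma cont_on_union {f : ℝ → ℝ} {s t : Set ℝ} (hs : IsClosed s) (ht : IsClosed t)
    (hfs : ContinuousOn f s) (hft : ContinuousOn f t) : ContinuousOn f (s ∪ t) := by
  intro x hx
  rcases hx with hx | hx
  · by_cases hxt : x ∈ t
    · exact ((hfs x hx).union (hft x hxt))
    · exact ((hfs x hx).union
        (continuousWithinAt_of_notMem_closure (by rwa [ht.closure_eq])))
  · by_cases hxs : x ∈ s
    · exact ((hfs x hxs).union (hft x hx))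
    · exact ((continuousWithinAt_of_notMem_closure (by rwa [hs.closure_eq])).union
        (hft x hx))

section core
variable {p q : ℕ} {c₁ c₂ φx φy : ℝ} {θ X Y R : ℝ → ℝ}

private lemma core (hp : 0 < p) (hq : Odd q) (hpq : Nat.Coprime p q)
    (hc₁ : c₁ ≠ 0) (hc₂ : c₂ ≠ 0)
    (hθcont : ContinuousOn θ (Set.Icc 0 1))
    (hX : ∀ τ, X τ = c₁ * Real.cos (2*π*p*τ + φx))
    (hY : ∀ τ, Y τ = c₂ * Real.cos (2*π*q*τ + φy))
    (hR : ∀ τ, R τ = Real.sqrt (X τ^2 + Y τ^2))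
    (hne : ∀ τ, 0 ≤ τ → τ ≤ 1 → ¬(X τ = 0 ∧ Y τ = 0))
    (hθ : ∀ τ, 0 ≤ τ → τ ≤ 1 →
      X τ = R τ * Real.cos (θ τ) ∧ Y τ = R τ * Real.sin (θ τ)) :
    (Even p → θ 1 - θ 0 = 0) ∧ (Odd p → θ 1 - θ 0 = 2*π ∨ θ 1 - θ 0 = -(2*π)) := by
  have hπ := Real.pi_pos
  have hq0 : 0 < q := hq.pos
  have hq0' : (0:ℝ) < (q:ℝ) := by exact_mod_cast hq0
  -- positivity of the norm
  have hRpos : ∀ τ, 0 ≤ τ → τ ≤ 1 → 0 < R τ := by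
    intro τ h0 h1
    rw [hR]
    apply Real.sqrt_pos.2
    rcases not_and_or.1 (hne τ h0 h1) with h | h <;> positivity
  -- periodicity
  have hXper : ∀ τ : ℝ, X τ = X (τ - 1) := by
    intro τ
    rw [hX, hX, show 2*π*(p:ℝ)*τ + φx = (2*π*(p:ℝ)*(τ-1) + φx) + (p:ℤ)*(2*π) by
      push_cast; ring, Real.cos_add_int_mul_two_pi]
  have hYper : ∀ τ : ℝ, Y τ = Y (τ - 1) := by
    intro τ
    rw [hY, hY, show 2*π*(q:ℝ)*τ + φy = (2*π*(q:ℝ)*(τ-1) + φy) + (q:ℤ)*(2*π) by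
      push_cast; ring, Real.cos_add_int_mul_two_pi]
  have hRper : ∀ τ : ℝ, R τ = R (τ - 1) := by
    intro τ; rw [hR, hR, ← hXper, ← hYper]
  -- the total change is a multiple of 2π
  have hN : ∃ N : ℤ, θ 1 - θ 0 = N * (2*π) := by
    have h0 := hθ 0 le_rfl zero_le_one
    have h1 := hθ 1 zero_le_one le_rfl
    have hX10 : X 1 = X 0 := by rw [hXper 1]; norm_num
    have hY10 : Y 1 = Y 0 := by rw [hYper 1]; norm_num
    have hR10 : R 1 = R 0 := by rw [hR, hR, hX10, hY10]
    have hR0 := hRpos 0 le_rfl zero_le_one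
    have hcos : Real.cos (θ 1) = Real.cos (θ 0) := by
      have := h1.1
      rw [hX10, hR10, h0.1] at this
      exact (mul_left_cancel₀ hR0.ne' this.symm)
    have hsin : Real.sin (θ 1) = Real.sin (θ 0) := by
      have := h1.2
      rw [hY10, hR10, h0.2] at this
      exact (mul_left_cancel₀ hR0.ne' this.symm)
    have hexp : Complex.exp ((θ 1 : ℂ) * Complex.I) = Complex.exp ((θ 0 : ℂ) * Complex.I) := by
      rw [Complex.exp_mul_I, Complex.exp_mul_I, ← Complex.ofReal_cos, ← Complex.ofReal_sin,
        ← Complex.ofReal_cos, ← Complex.ofReal_sin, hcos, hsin]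
    obtain ⟨n, hn⟩ := Complex.exp_eq_exp_iff_exists_int.1 hexp
    refine ⟨n, ?_⟩
    have him := congrArg Complex.im hn
    simp at him
    linarith
  obtain ⟨N, hNeq⟩ := hN
  -- zeros of Y
  set u : ℝ := 1/2 - φy/π with hu
  set t : ℕ → ℝ := fun k => (Int.fract u + k)/(2*q) with ht
  have hfr0 := Int.fract_nonneg u
  have hfr1 := Int.fract_lt_one u
  have ht0 : 0 ≤ t 0 := by
    simp only [ht]
    have : (0:ℝ) < 2*q := by positivity
    positivity
  have htmono : ∀ j k : ℕ, j ≤ k → t j ≤ t k := by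
    intro j k hjk
    simp only [ht]
    have : (j:ℝ) ≤ (k:ℝ) := by exact_mod_cast hjk
    gcongr
  have htlt : ∀ k : ℕ, t k < t (k+1) := by
    intro k
    simp only [ht]
    have h2q : (0:ℝ) < 2*q := by positivity
    apply div_lt_div_of_pos_right ?_ h2q
    push_cast; linarith
  have ht01 : t 0 ≤ 1 := by
    simp only [ht]
    rw [div_le_one (by positivity)]
    push_cast
    have : (1:ℝ) ≤ q := by exact_mod_cast hq0
    linarith
  have ht2q : t (2*q) = t 0 + 1 := by
    simp only [ht]
    field_simp
    try push_cast
    try ring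
  -- the lifted argument beyond time 1
  set θh : ℝ → ℝ := fun τ => if τ ≤ 1 then θ τ else θ (τ - 1) + (θ 1 - θ 0) with hθh
  have hθhcont : ContinuousOn θh (Set.Icc 0 (t 0 + 1)) := by
    have hsplit : Set.Icc (0:ℝ) (t 0 + 1) = Set.Icc 0 1 ∪ Set.Icc 1 (t 0 + 1) :=
      (Set.Icc_union_Icc_eq_Icc zero_le_one (by linarith)).symm
    rw [hsplit]
    apply cont_on_union isClosed_Icc isClosed_Icc
    · apply hθcont.congr
      intro τ hτ
      simp only [hθh, if_pos hτ.2]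
    · have hcomp : ContinuousOn (fun τ => θ (τ - 1) + (θ 1 - θ 0)) (Set.Icc 1 (t 0 + 1)) := by
        apply ContinuousOn.add
        · apply hθcont.comp (Continuous.continuousOn (continuous_id.sub continuous_const))
          intro τ hτ
          exact ⟨by simp only [Pi.sub_apply, id]; linarith [hτ.1], by simp only [Pi.sub_apply, id]; linarith [hτ.2, ht01]⟩
        · exact continuousOn_const
      apply hcomp.congr
      intro τ hτ
      simp only [hθh]
      rcases lt_or_ge 1 τ with h | h
      · rw [if_neg (not_le.2 h)]
      · have hτ1 : τ = 1 := le_antisymm h hτ.1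
        rw [if_pos h, hτ1]
        ring_nf
  -- master relation on [0, t 0 + 1]
  have hmaster : ∀ τ, 0 ≤ τ → τ ≤ t 0 + 1 →
      0 < R τ ∧ X τ = R τ * Real.cos (θh τ) ∧ Y τ = R τ * Real.sin (θh τ) := by
    intro τ hτ0 hτ1
    rcases le_or_gt τ 1 with h | h
    · have := hθ τ hτ0 h
      simp only [hθh, if_pos h]
      exact ⟨hRpos τ hτ0 h, this⟩
    · have h0 : 0 ≤ τ - 1 := by linarith
      have h1 : τ - 1 ≤ 1 := by linarith [ht01]
      have := hθ (τ - 1) h0 h1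
      simp only [hθh, if_neg (not_le.2 h)]
      rw [hXper τ, hYper τ, hRper τ, hNeq]
      rw [show θ (τ-1) + (N:ℝ)*(2*π) = θ (τ-1) + (N:ℤ)*(2*π) by push_cast; ring]
      rw [Real.cos_add_int_mul_two_pi, Real.sin_add_int_mul_two_pi]
      exact ⟨hRpos _ h0 h1, this⟩
  -- angle values at the zeros of Y
  have hπ0 : π ≠ 0 := hπ.ne'
  have hang : ∀ k : ℕ, 2*π*(q:ℝ)*(t k) + φy = π/2 + (((k:ℤ) - ⌊u⌋ : ℤ):ℝ)*π := by
    intro k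
    simp only [ht]
    have hfr : Int.fract u = u - ⌊u⌋ := rfl
    rw [hfr, hu]
    push_cast
    field_simp
    ring
  have hYt0 : ∀ k : ℕ, Y (t k) = 0 := by
    intro k
    rw [hY, hang k, Real.cos_add_int_mul_pi, Real.cos_pi_div_two]
    ring
  -- membership facts
  have htmem : ∀ k : ℕ, k ≤ 2*q → 0 ≤ t k ∧ t k ≤ t 0 + 1 := by
    intro k hk
    exact ⟨le_trans ht0 (htmono 0 k (Nat.zero_le _)), by rw [← ht2q]; exact htmono k (2*q) hk⟩
  -- sin θh vanishes at the t k
  have hsin0 : ∀ k : ℕ, k ≤ 2*q → Real.sin (θh (t k)) = 0 := by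
    intro k hk
    have hm := hmaster (t k) (htmem k hk).1 (htmem k hk).2
    have := hm.2.2
    rw [hYt0 k] at this
    rcases mul_eq_zero.1 this.symm with h | h
    · exact absurd h hm.1.ne'
    · exact h
  -- X does not vanish at the t k
  have hXtne : ∀ k : ℕ, k ≤ 2*q → X (t k) ≠ 0 := by
    intro k hk h
    have hm := hmaster (t k) (htmem k hk).1 (htmem k hk).2
    have h2 : 0 < X (t k)^2 + Y (t k)^2 := by
      apply Real.sqrt_pos.1
      rw [← hR]; exact hm.1
    rw [h, hYt0 k] at h2
    norm_num at h2
  -- the endpoint signs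
  set s : ℕ → ℝ := fun k => if 0 < X (t k) then (1:ℝ) else -1 with hs
  have hcs : ∀ k : ℕ, k ≤ 2*q → Real.cos (θh (t k)) = s k := by
    intro k hk
    have hm := hmaster (t k) (htmem k hk).1 (htmem k hk).2
    rcases Real.sin_eq_zero_iff_cos_eq.1 (hsin0 k hk) with h | h
    · have hXpos : 0 < X (t k) := by
        rw [hm.2.1, h, mul_one]; exact hm.1
      simp only [hs, if_pos hXpos, h]
    · have hXneg : X (t k) < 0 := by
        rw [hm.2.1, h]; nlinarith [hm.1]
      simp only [hs, if_neg (not_lt.2 hXneg.le), h]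
  -- interval signs for Y
  set εy : ℝ := if 0 < c₂ then (1:ℝ) else -1 with hεy
  have hεyc : 0 < εy * c₂ := by
    rcases lt_trichotomy 0 c₂ with h | h | h
    · simp only [hεy, if_pos h]; linarith
    · exact absurd h.symm hc₂
    · simp only [hεy, if_neg (by linarith : ¬ 0 < c₂)]; nlinarith
  have hzpm : ∀ m : ℤ, (-1:ℝ)^m = 1 ∨ (-1:ℝ)^m = -1 := by
    intro m
    rcases Int.even_or_odd m with h | h
    · left; rw [npe m 0 (by simpa using h), zpow_zero]
    · right; rw [npe m 1 (by simpa [Int.even_sub] using h), zpow_one]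
  set σ : ℕ → ℝ := fun k => εy * (-1:ℝ)^((k:ℤ) - ⌊u⌋ + 1) with hσ
  have hσpm : ∀ k : ℕ, σ k = 1 ∨ σ k = -1 := by
    intro k
    simp only [hσ]
    rcases hzpm ((k:ℤ) - ⌊u⌋ + 1) with h | h <;> rw [h] <;>
      rcases lt_or_ge 0 c₂ with h2 | h2
    · simp only [hεy, if_pos h2]; norm_num
    · simp only [hεy, if_neg (not_lt.2 h2)]; norm_num
    · simp only [hεy, if_pos h2]; norm_num
    · simp only [hεy, if_neg (not_lt.2 h2)]; norm_num
  have hσsin : ∀ k : ℕ, k < 2*q → ∀ τ ∈ Set.Ioo (t k) (t (k+1)),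
      0 < σ k * Real.sin (θh τ) := by
    intro k hk τ hτ
    have hτ0 : 0 ≤ τ := le_trans (htmem k hk.le).1 hτ.1.le
    have hτ1 : τ ≤ t 0 + 1 := le_trans hτ.2.le (htmem (k+1) hk).2
    have hm := hmaster τ hτ0 hτ1
    have hAk := hang k
    have hAk1 := hang (k+1)
    have hmono1 : 2*π*(q:ℝ)*(t k) + φy < 2*π*(q:ℝ)*τ + φy := by
      have : (0:ℝ) < 2*π*q := by positivity
      nlinarith [hτ.1]
    have hmono2 : 2*π*(q:ℝ)*τ + φy < 2*π*(q:ℝ)*(t (k+1)) + φy := by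
      have : (0:ℝ) < 2*π*q := by positivity
      nlinarith [hτ.2]
    have hcossign : 0 < (-1:ℝ)^((k:ℤ) - ⌊u⌋ + 1) * Real.cos (2*π*(q:ℝ)*τ + φy) := by
      apply sign_cos_Ioo
      · push_cast
        rw [hAk] at hmono1
        push_cast at hmono1
        linarith
      · push_cast
        rw [hAk1] at hmono2
        push_cast at hmono2
        linarith
    have hY5 : 0 < σ k * Y τ := by
      rw [hY]
      simp only [hσ]
      rw [show εy * (-1:ℝ)^((k:ℤ) - ⌊u⌋ + 1) * (c₂ * Real.cos (2*π*(q:ℝ)*τ + φy))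
        = (εy * c₂) * ((-1:ℝ)^((k:ℤ) - ⌊u⌋ + 1) * Real.cos (2*π*(q:ℝ)*τ + φy)) by ring]
      exact mul_pos hεyc hcossign
    have hY6 : 0 < R τ * (σ k * Real.sin (θh τ)) := by
      rw [show R τ * (σ k * Real.sin (θh τ)) = σ k * (R τ * Real.sin (θh τ)) by ring,
        ← hm.2.2]
      exact hY5
    rcases mul_pos_iff.1 hY6 with ⟨_, h⟩ | ⟨h1', _⟩
    · exact h
    · linarith [hm.1]
  -- apply the step lemma on each interval and telescope
  have hstep : ∀ k : ℕ, k < 2*q →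
      θh (t (k+1)) - θh (t k) = σ k * (s k - s (k+1)) * (π/2) := by
    intro k hk
    have hsub : Set.Icc (t k) (t (k+1)) ⊆ Set.Icc 0 (t 0 + 1) := by
      intro x hx
      exact ⟨le_trans (htmem k hk.le).1 hx.1, le_trans hx.2 (htmem (k+1) hk).2⟩
    exact step_lemma (htlt k) (hθhcont.mono hsub) (hσpm k) (hσsin k hk)
      (hcs k hk.le) (hcs (k+1) hk) (hsin0 k hk.le) (hsin0 (k+1) hk)
  have htel : θ 1 - θ 0 = ∑ k ∈ range (2*q), σ k * (s k - s (k+1)) * (π/2) := by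
    have h1 : ∑ k ∈ range (2*q), (θh (t (k+1)) - θh (t k)) = θh (t (2*q)) - θh (t 0) :=
      Finset.sum_range_sub (fun k => θh (t k)) (2*q)
    have h2 : θh (t 0) = θ (t 0) := by simp only [hθh, if_pos ht01]
    have h3 : θh (t (2*q)) = θ (t 0) + (θ 1 - θ 0) := by
      rw [ht2q]
      rcases lt_or_ge 1 (t 0 + 1) with h | h
      · simp only [hθh, if_neg (not_le.2 h)]
        rw [show t 0 + 1 - 1 = t 0 by ring]
      · have h4 : t 0 = 0 := le_antisymm (by linarith) ht0
        rw [h4]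
        simp only [hθh, zero_add, if_pos (le_refl (1:ℝ))]
        ring
    rw [← Finset.sum_congr rfl (fun k hk => hstep k (Finset.mem_range.1 hk)), h1, h2, h3]
    ring
  -- algebraic reorganisation of the sum
  have hne' : (-1:ℝ) ≠ 0 := by norm_num
  set σ0 : ℝ := εy * (-1:ℝ)^(1 - ⌊u⌋) with hσ0def
  have hσsplit : ∀ k : ℕ, σ k = σ0 * (-1:ℝ)^(k:ℤ) := by
    intro k
    simp only [hσ, hσ0def]
    rw [show (k:ℤ) - ⌊u⌋ + 1 = (1 - ⌊u⌋) + (k:ℤ) by ring, zpow_add₀ hne']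
    ring
  set S : ℝ := ∑ k ∈ range (2*q), (-1:ℝ)^(k:ℤ) * s k with hSdef
  have hs2q : s (2*q) = s 0 := by
    have hX2q : X (t (2*q)) = X (t 0) := by
      rw [ht2q, hXper (t 0 + 1), show t 0 + 1 - 1 = t 0 by ring]
    simp only [hs, hX2q]
  have hshift : ∑ k ∈ range (2*q), (-1:ℝ)^(k:ℤ) * s (k+1) = -S := by
    have e1 : ∀ j : ℕ, (-1:ℝ)^((j+1:ℕ):ℤ) = -((-1:ℝ)^(j:ℤ)) := by
      intro j
      push_cast
      rw [zpow_add₀ hne', zpow_one]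
      ring
    have e2 : ∑ i ∈ range (2*q+1), (-1:ℝ)^(i:ℤ) * s i
        = (∑ i ∈ range (2*q), (-1:ℝ)^((i+1:ℕ):ℤ) * s (i+1)) + (-1:ℝ)^((0:ℕ):ℤ) * s 0 :=
      Finset.sum_range_succ' _ (2*q)
    have e3 : ∑ i ∈ range (2*q+1), (-1:ℝ)^(i:ℤ) * s i
        = S + (-1:ℝ)^((2*q:ℕ):ℤ) * s (2*q) := by
      rw [Finset.sum_range_succ, hSdef]
    have e4 : (-1:ℝ)^((2*q:ℕ):ℤ) = 1 := by
      rw [npe _ 0 (by push_cast; exact ⟨q, by ring⟩), zpow_zero]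
    have e5 : ∑ i ∈ range (2*q), (-1:ℝ)^((i+1:ℕ):ℤ) * s (i+1) = S := by
      rw [e3, hs2q, e4] at e2
      simp only [Nat.cast_zero, zpow_zero, one_mul] at e2
      linarith [e2]
    calc ∑ k ∈ range (2*q), (-1:ℝ)^(k:ℤ) * s (k+1)
        = ∑ k ∈ range (2*q), -((-1:ℝ)^((k+1:ℕ):ℤ) * s (k+1)) := by
          apply Finset.sum_congr rfl
          intro k _
          rw [e1]
          ring
      _ = -∑ k ∈ range (2*q), (-1:ℝ)^((k+1:ℕ):ℤ) * s (k+1) := by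
          rw [Finset.sum_neg_distrib]
      _ = -S := by rw [e5]
  have hW : θ 1 - θ 0 = π * σ0 * S := by
    rw [htel]
    have hc : ∀ k ∈ range (2*q), σ k * (s k - s (k+1)) * (π/2)
        = (σ0*(π/2)) * ((-1:ℝ)^(k:ℤ) * s k) - (σ0*(π/2)) * ((-1:ℝ)^(k:ℤ) * s (k+1)) := by
      intro k _
      rw [hσsplit k]
      ring
    rw [Finset.sum_congr rfl hc, Finset.sum_sub_distrib, ← Finset.mul_sum, ← Finset.mul_sum,
      hshift, hSdef]
    ring
  -- identify the endpoint signs with the arithmetic expression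
  set εx : ℝ := if 0 < c₁ then (1:ℝ) else -1 with hεx
  set α : ℝ := 2*π*(p:ℝ)*(t 0) + φx with hα
  set β : ℝ := α/π + 1/2 with hβ
  set n : ℤ := ⌊β*(q:ℝ)⌋ with hn
  have hXang : ∀ k : ℕ, 2*π*(p:ℝ)*(t k) + φx = α + (k:ℝ)*(π*(p:ℝ)/(q:ℝ)) := by
    intro k
    simp only [hα, ht]
    push_cast
    field_simp
    ring
  have hskey : ∀ k : ℕ, k ≤ 2*q → s k = εx * (-1:ℝ)^((n + (k:ℤ)*(p:ℤ))/((q:ℕ):ℤ)) := by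
    intro k hk
    set A : ℝ := α + (k:ℝ)*(π*(p:ℝ)/(q:ℝ)) with hA
    have hXk : X (t k) = c₁ * Real.cos A := by rw [hX, hXang k]
    have hcne : Real.cos A ≠ 0 := by
      intro h
      apply hXtne k hk
      rw [hXk, h, mul_zero]
    set d : ℤ := (n + (k:ℤ)*(p:ℤ))/((q:ℕ):ℤ) with hd
    have hfl : d = ⌊A/π + 1/2⌋ := by
      have h1 : A/π + 1/2 = (β*(q:ℝ) + (((k:ℤ)*(p:ℤ) : ℤ):ℝ))/((((q:ℕ):ℤ)):ℝ) := by
        simp only [hβ, hA]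
        push_cast
        field_simp
        ring
      have h2 : n + (k:ℤ)*(p:ℤ) = ⌊β*(q:ℝ) + (((k:ℤ)*(p:ℤ) : ℤ):ℝ)⌋ := by
        rw [Int.floor_add_intCast, hn]
      rw [hd, h2, ← floor_div_int (β*(q:ℝ) + (((k:ℤ)*(p:ℤ) : ℤ):ℝ)) ((q:ℕ):ℤ)
        (by exact_mod_cast hq0), ← h1]
    have hfl1 : (d:ℝ) ≤ A/π + 1/2 := by rw [hfl]; exact Int.floor_le _
    have hfl2 : A/π + 1/2 < (d:ℝ) + 1 := by rw [hfl]; exact Int.lt_floor_add_one _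
    have hbound1 : (d:ℝ)*π - π/2 ≤ A := by
      have := mul_le_mul_of_nonneg_right hfl1 hπ.le
      rw [add_mul, div_mul_cancel₀ _ hπ0] at this
      linarith
    have hbound2 : A < (d:ℝ)*π + π/2 := by
      have := mul_lt_mul_of_pos_right hfl2 hπ
      rw [add_mul, div_mul_cancel₀ _ hπ0] at this
      linarith
    have hAne : A ≠ (d:ℝ)*π - π/2 := by
      intro h
      apply hcne
      rw [h, show (d:ℝ)*π - π/2 = -(π/2 - (d:ℝ)*π) by ring, Real.cos_neg,
        Real.cos_pi_div_two_sub, Real.sin_int_mul_pi]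
    have hsgn : 0 < (-1:ℝ)^d * Real.cos A :=
      sign_cos_Ioo (lt_of_le_of_ne hbound1 (Ne.symm hAne)) hbound2
    simp only [hs, hXk]
    rcases hzpm d with h | h <;> rw [h] <;> rw [h] at hsgn
    · rw [one_mul] at hsgn
      rcases lt_or_ge 0 c₁ with h2 | h2
      · rw [if_pos (mul_pos h2 hsgn)]
        simp only [hεx, if_pos h2]
        norm_num
      · have h2' : c₁ < 0 := lt_of_le_of_ne h2 hc₁
        rw [if_neg (by nlinarith : ¬ 0 < c₁ * Real.cos A)]
        simp only [hεx, if_neg (not_lt.2 h2)]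
        norm_num
    · have hsgn' : Real.cos A < 0 := by nlinarith
      rcases lt_or_ge 0 c₁ with h2 | h2
      · rw [if_neg (by nlinarith : ¬ 0 < c₁ * Real.cos A)]
        simp only [hεx, if_pos h2]
        norm_num
      · have h2' : c₁ < 0 := lt_of_le_of_ne h2 hc₁
        rw [if_pos (by nlinarith : 0 < c₁ * Real.cos A)]
        simp only [hεx, if_neg (not_lt.2 h2)]
        norm_num
  have hSeq : S = εx * ∑ k ∈ range (2*q),
      (-1:ℝ)^(k:ℤ) * (-1:ℝ)^((n + (k:ℤ)*(p:ℤ))/((q:ℕ):ℤ)) := by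
    rw [hSdef, Finset.mul_sum]
    apply Finset.sum_congr rfl
    intro k hk
    rw [hskey k (le_of_lt (Finset.mem_range.1 hk))]
    ring
  have hkey := key_sum p q hq hpq n
  have hεxpm : εx = 1 ∨ εx = -1 := by
    rcases lt_or_ge 0 c₁ with h | h
    · left; simp only [hεx, if_pos h]
    · right; simp only [hεx, if_neg (not_lt.2 h)]
  have hσ0pm : σ0 = 1 ∨ σ0 = -1 := by
    simp only [hσ0def]
    rcases hzpm (1 - ⌊u⌋) with h | h <;> rw [h] <;>
      rcases lt_or_ge 0 c₂ with h2 | h2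
    · left; simp only [hεy, if_pos h2]; norm_num
    · right; simp only [hεy, if_neg (not_lt.2 h2)]; norm_num
    · right; simp only [hεy, if_pos h2]; norm_num
    · left; simp only [hεy, if_neg (not_lt.2 h2)]; norm_num
  constructor
  · intro hpe
    rw [hW, hSeq, hkey.2 hpe]
    ring
  · intro hpo
    rw [hW, hSeq, hkey.1 hpo]
    rcases hσ0pm with h1 | h1 <;> rcases hεxpm with h2 | h2 <;> rcases hzpm n with h3 | h3 <;>
      rw [h1, h2, h3] <;> first | (left; ring1) | (right; ring1)

end core


/-- Winding number of the relative-position curve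
`γ(τ) = (c₁ cos(2πpτ + φx), c₂ cos(2πqτ + φy))` about the origin: given any
continuous argument function `θ` for `γ` on `[0,1]`, if at least one of the
coprime positive frequencies `p, q` is even then `θ(1) - θ(0) = 0`, and if
both are odd then `θ(1) - θ(0) = ±2π`. -/
theorem lissajous_winding (p q : ℕ) (hp : 0 < p) (hq : 0 < q)
    (hpq : Nat.Coprime p q) (c₁ c₂ φx φy : ℝ) (hc₁ : c₁ ≠ 0) (hc₂ : c₂ ≠ 0)
    (hne : ∀ τ ∈ Set.Icc (0 : ℝ) 1,
        (c₁ * Real.cos (2 * π * p * τ + φx),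
         c₂ * Real.cos (2 * π * q * τ + φy)) ≠ (0, 0))
    (θ : ℝ → ℝ) (hθcont : ContinuousOn θ (Set.Icc 0 1))
    (hθ : ∀ τ ∈ Set.Icc (0 : ℝ) 1,
        c₁ * Real.cos (2 * π * p * τ + φx) =
          Real.sqrt ((c₁ * Real.cos (2 * π * p * τ + φx)) ^ 2 +
            (c₂ * Real.cos (2 * π * q * τ + φy)) ^ 2) * Real.cos (θ τ) ∧
        c₂ * Real.cos (2 * π * q * τ + φy) =
          Real.sqrt ((c₁ * Real.cos (2 * π * p * τ + φx)) ^ 2 +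
            (c₂ * Real.cos (2 * π * q * τ + φy)) ^ 2) * Real.sin (θ τ)) :
    ((Even p ∨ Even q) → θ 1 - θ 0 = 0) ∧
    (Odd p → Odd q → (θ 1 - θ 0 = 2 * π ∨ θ 1 - θ 0 = -(2 * π))) := by
  rcases Nat.even_or_odd q with hqe | hqo
  · -- q is even, hence p is odd: apply `core` with the coordinates swapped
    have hpo : Odd p := by
      rcases Nat.even_or_odd p with hpe | h
      · exfalso
        have h2 : 2 ∣ Nat.gcd p q := Nat.dvd_gcd hpe.two_dvd hqe.two_dvd
        rw [hpq.gcd_eq_one] at h2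
        norm_num at h2
      · exact h
    have hcore := core (p := q) (q := p) (c₁ := c₂) (c₂ := c₁) (φx := φy) (φy := φx)
      (θ := fun τ => π/2 - θ τ)
      (X := fun τ => c₂ * Real.cos (2 * π * q * τ + φy))
      (Y := fun τ => c₁ * Real.cos (2 * π * p * τ + φx))
      (R := fun τ => Real.sqrt ((c₂ * Real.cos (2 * π * q * τ + φy))^2 +
        (c₁ * Real.cos (2 * π * p * τ + φx))^2))
      hq hpo hpq.symm hc₂ hc₁
      (continuousOn_const.sub hθcont)
      (fun τ => rfl) (fun τ => rfl) (fun τ => rfl)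
      (by
        intro τ h0 h1 hcon
        exact hne τ ⟨h0, h1⟩ (by rw [hcon.2, hcon.1])
      )
      (by
        intro τ h0 h1
        have h := hθ τ ⟨h0, h1⟩
        constructor
        · rw [Real.cos_pi_div_two_sub, add_comm ((c₂ * Real.cos (2 * π * q * τ + φy))^2)]
          exact h.2
        · rw [Real.sin_pi_div_two_sub, add_comm ((c₂ * Real.cos (2 * π * q * τ + φy))^2)]
          exact h.1
      )
    constructor
    · intro _
      have h := hcore.1 hqe
      linarith
    · intro _ hqo'
      exact absurd hqo' (by rwa [← Nat.not_even_iff_odd, not_not])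
  · -- q is odd: apply `core` directly
    have hcore := core (p := p) (q := q) (c₁ := c₁) (c₂ := c₂) (φx := φx) (φy := φy)
      (θ := θ)
      (X := fun τ => c₁ * Real.cos (2 * π * p * τ + φx))
      (Y := fun τ => c₂ * Real.cos (2 * π * q * τ + φy))
      (R := fun τ => Real.sqrt ((c₁ * Real.cos (2 * π * p * τ + φx))^2 +
        (c₂ * Real.cos (2 * π * q * τ + φy))^2))
      hp hqo hpq hc₁ hc₂ hθcont
      (fun τ => rfl) (fun τ => rfl) (fun τ => rfl)
      (by
        intro τ h0 h1 hcon
        exact hne τ ⟨h0, h1⟩ (by rw [hcon.1, hcon.2])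
      )
      (fun τ h0 h1 => hθ τ ⟨h0, h1⟩)
    constructor
    · intro hor
      rcases hor with hpe | hqe2
      · exact hcore.1 hpe
      · exact absurd hqe2 (Nat.not_even_iff_odd.2 hqo)
    · intro hp' _
      exact hcore.2 hp'
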